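/- Let F be a field, N ≥ 1, and D = (C_1,…,C_r) a northwest diagram with pairwise distinct columns contained in {1,…,N} that is closed under intersections (for every nonempty S ⊆ {1,…,r}, the set ⋂_{j∈S} C_j equals some column of D). Let V_1,…,V_r be subspaces of F^N such that for every nonempty subset S ⊆ {1,…,r}: dim(Σ_{j∈S} V_j) = |⋃_{j∈S} C_j| and dim(⋂_{j∈S} V_j) = |⋂_{j∈S} C_j|. Then there exists a basis v_1,…,v_N of F^N such that V_j = span{v_i : i ∈ C_j} for every j. -/

import Mathlib

/-- A diagram, given as a list of columns `C : Fin r → Finset ℕ`, is *northwest* if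
for all `j ≤ j'`, `i ∈ C j` and `i' ∈ C j'` imply `min i i' ∈ C j`. -/
def IsNorthwest {r : ℕ} (C : Fin r → Finset ℕ) : Prop :=
  ∀ j j' : Fin r, j ≤ j' → ∀ i ∈ C j, ∀ i' ∈ C j', min i i' ∈ C j

/-- `A` is an *initial subset* of `B` : `A ⊊ B` and every element of `B \ A` is greater
than every element of `A`. -/
def InitSub (A B : Finset ℕ) : Prop :=
  A ⊂ B ∧ ∀ x ∈ B \ A, ∀ y ∈ A, y < x

/-- Lexicographic comparison of finite subsets of `ℕ`, comparing the increasing lists of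
elements: `A <lex B` iff the sorted list of `A` is smaller than that of `B` in the
(strict) lexicographic order on lists (in particular a proper initial segment is
smaller). -/
def LexLT (A B : Finset ℕ) : Prop :=
  List.Lex (· < ·) (A.sort (· ≤ ·)) (B.sort (· ≤ ·))

/-- A list of columns is *lexicographic* if it is strictly increasing in `LexLT`
(in particular the columns are pairwise distinct). -/
def IsLex {r : ℕ} (C : Fin r → Finset ℕ) : Prop :=
  ∀ a b : Fin r, a < b → LexLT (C a) (C b)

section ConfigAux

open Module Submodule



variable {F V : Type} [Field F] [AddCommGroup V] [Module F V] [FiniteDimensional F V]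

lemma aux_finrank_sup_span_singleton {T : Submodule F V} {v : V} (hv : v ∉ T) :
    finrank F ↥(T ⊔ span F {v}) = finrank F T + 1 := by
  have hv0 : v ≠ 0 := by rintro rfl; exact hv T.zero_mem
  have h1 : T ⊓ span F {v} = ⊥ := by
    rw [eq_bot_iff]
    rintro x ⟨hxT, hxs⟩
    obtain ⟨c, rfl⟩ := mem_span_singleton.mp hxs
    rcases eq_or_ne c 0 with rfl | hc
    · simp
    · exact absurd (by simpa [smul_smul, inv_mul_cancel₀ hc] using T.smul_mem c⁻¹ hxT) hv
  have := Submodule.finrank_sup_add_finrank_inf_eq T (span F {v})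
  rw [h1, finrank_bot, finrank_span_singleton hv0] at this
  omega

lemma rado_aux :
    ∀ (n : ℕ) (U : Submodule F V) (X : Fin n → Submodule F V),
      (∀ P : Finset (Fin n), finrank F U + P.card ≤ finrank F ↥(U ⊔ P.sup X)) →
      ∃ v : Fin n → V, (∀ p, v p ∈ X p) ∧
        finrank F U + n ≤ finrank F ↥(U ⊔ span F (Set.range v)) := by
  intro n
  induction n with
  | zero =>
    intro U X _
    refine ⟨Fin.elim0, fun p => p.elim0, ?_⟩
    rw [Set.range_eq_empty, span_empty, sup_bot_eq]
    simp
  | succ n ih =>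
    intro U X h
    classical
    set S : Finset (Fin n) → Submodule F V := fun P => P.sup (X ∘ Fin.succ) with hS
    have h' : ∀ P : Finset (Fin n), finrank F U + P.card ≤ finrank F ↥(U ⊔ S P) := by
      intro P
      have := h (P.image Fin.succ)
      rwa [Finset.sup_image, Finset.card_image_of_injective _ (Fin.succ_injective n)] at this
    set crit : Finset (Fin n) → Prop := fun P => finrank F ↥(U ⊔ S P) = finrank F U + P.card
      with hcrit
    have Smono : ∀ {P Q : Finset (Fin n)}, P ⊆ Q → S P ≤ S Q := fun hPQ =>
      Finset.sup_mono hPQ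
    have crit_empty : crit ∅ := by
      show finrank F ↥(U ⊔ S ∅) = finrank F ↥U + (∅ : Finset (Fin n)).card
      rw [show S ∅ = ⊥ from Finset.sup_empty, sup_bot_eq, Finset.card_empty]
      simp
    have crit_union : ∀ P Q, crit P → crit Q → crit (P ∪ Q) := by
      intro P Q hP hQ
      have hsupS : S (P ∪ Q) = S P ⊔ S Q := Finset.sup_union
      have key := Submodule.finrank_sup_add_finrank_inf_eq (U ⊔ S P) (U ⊔ S Q)
      have e1 : (U ⊔ S P) ⊔ (U ⊔ S Q) = U ⊔ S (P ∪ Q) := by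
        rw [hsupS, sup_sup_sup_comm, sup_idem]
      have e2 : U ⊔ S (P ∩ Q) ≤ (U ⊔ S P) ⊓ (U ⊔ S Q) :=
        le_inf (sup_le_sup_left (Smono Finset.inter_subset_left) U)
          (sup_le_sup_left (Smono Finset.inter_subset_right) U)
      have e3 := Submodule.finrank_mono e2
      have e4 := h' (P ∩ Q)
      have e5 := h' (P ∪ Q)
      have ecard := Finset.card_union_add_card_inter P Q
      rw [e1, hP, hQ] at key
      show finrank F ↥(U ⊔ S (P ∪ Q)) = finrank F U + (P ∪ Q).card
      omega
    set Pstar : Finset (Fin n) := (Finset.univ.filter crit).sup id with hPstar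
    have crit_star : crit Pstar := by
      apply Finset.sup_induction crit_empty (fun a ha b hb => crit_union a b ha hb)
      intro P hP
      exact (Finset.mem_filter.mp hP).2
    have sub_star : ∀ P, crit P → P ⊆ Pstar := by
      intro P hP
      exact Finset.le_sup (f := id) (Finset.mem_filter.mpr ⟨Finset.mem_univ _, hP⟩)
    -- find v₀
    have hQ : finrank F U + Pstar.card + 1 ≤ finrank F ↥(U ⊔ (X 0 ⊔ S Pstar)) := by
      have := h (insert 0 (Pstar.image Fin.succ))
      rw [Finset.sup_insert, Finset.sup_image] at this
      rw [Finset.card_insert_of_notMem (by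
        simp only [Finset.mem_image]
        rintro ⟨a, -, ha⟩
        exact (Fin.succ_ne_zero a) ha),
        Finset.card_image_of_injective _ (Fin.succ_injective n)] at this
      have e : Pstar.sup (X ∘ Fin.succ) = S Pstar := rfl
      rw [e] at this
      omega
    have hnotle : ¬ X 0 ≤ U ⊔ S Pstar := by
      intro hle
      have e : U ⊔ (X 0 ⊔ S Pstar) = (U ⊔ S Pstar) ⊔ X 0 := by
        rw [sup_comm (X 0) (S Pstar), ← sup_assoc]
      rw [e, sup_eq_left.mpr hle, crit_star] at hQ
      omega
    obtain ⟨v₀, hv₀X, hv₀⟩ := SetLike.not_le_iff_exists.mp hnotle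
    have hv₀U : v₀ ∉ U := fun hU => hv₀ (le_sup_left (a := U) (b := S Pstar) hU)
    set U' : Submodule F V := U ⊔ span F {v₀} with hU'
    have hU'rank : finrank F U' = finrank F U + 1 := aux_finrank_sup_span_singleton hv₀U
    have ih_hyp : ∀ P : Finset (Fin n),
        finrank F U' + P.card ≤ finrank F ↥(U' ⊔ P.sup (X ∘ Fin.succ)) := by
      intro P
      have erw : U' ⊔ S P = (U ⊔ S P) ⊔ span F {v₀} := by
        rw [hU', sup_right_comm]
      rw [hU'rank]
      show finrank F U + 1 + P.card ≤ finrank F ↥(U' ⊔ S P)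
      by_cases hc : crit P
      · have hvP : v₀ ∉ U ⊔ S P := fun hmem =>
          hv₀ (sup_le_sup_left (Smono (sub_star P hc)) U hmem)
        rw [erw, aux_finrank_sup_span_singleton hvP, hc]
        omega
      · have h1 : finrank F U + P.card + 1 ≤ finrank F ↥(U ⊔ S P) := by
          have := h' P
          rcases lt_or_eq_of_le this with h | h
          · omega
          · exact absurd h.symm hc
        have h2 : finrank F ↥(U ⊔ S P) ≤ finrank F ↥(U' ⊔ S P) :=
          Submodule.finrank_mono (sup_le_sup_right le_sup_left _)
        omega
    obtain ⟨w, hwX, hwrank⟩ := ih U' (X ∘ Fin.succ) ih_hyp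
    refine ⟨Fin.cons v₀ w, ?_, ?_⟩
    · intro p
      refine Fin.cases ?_ ?_ p
      · exact hv₀X
      · intro i
        simpa [Fin.cons_succ] using hwX i
    · have hrange : Set.range (Fin.cons v₀ w : Fin (n+1) → V) = insert v₀ (Set.range w) := by
        rw [Fin.range_cons]
      rw [hrange, Submodule.span_insert]
      have : U ⊔ (span F {v₀} ⊔ span F (Set.range w)) = U' ⊔ span F (Set.range w) := by
        rw [hU', sup_assoc]
      rw [this]
      rw [hU'rank] at hwrank
      omega

end ConfigAux

open Module Submodule

/-- In a northwest diagram with distinct columns in `{1,…,N}` (rows encoded on `Fin N`,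
`k : Fin N` standing for the row `k+1`) closed under intersections, any family of
subspaces of `F^N` whose sums and intersections have exactly the dimensions prescribed
by the unions and intersections of the columns is a "generic" configuration: it comes
from a single basis of `F^N`. -/
theorem config_from_basis (F : Type) [Field F] (N r : ℕ) (hN : 1 ≤ N)
    (C : Fin r → Finset ℕ) (hNW : IsNorthwest C) (hinj : Function.Injective C)
    (hsub : ∀ j, C j ⊆ Finset.Icc 1 N)
    (hclosed : ∀ (S : Finset (Fin r)) (hS : S.Nonempty), ∃ j, S.inf' hS C = C j)
    (W : Fin r → Submodule F (Fin N → F))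
    (hsup : ∀ (S : Finset (Fin r)), S.Nonempty →
      Module.finrank F ↥(⨆ j ∈ S, W j) = (S.sup C).card)
    (hinf : ∀ (S : Finset (Fin r)) (hS : S.Nonempty),
      Module.finrank F ↥(⨅ j ∈ S, W j) = (S.inf' hS C).card) :
    ∃ v : Basis (Fin N) F (Fin N → F),
      ∀ j, W j = Submodule.span F (v '' {k : Fin N | (k : ℕ) + 1 ∈ C j}) := by
  classical
  -- basic facts
  have hWrank : ∀ j, finrank F ↥(W j) = (C j).card := by
    intro j
    have := hsup {j} (Finset.singleton_nonempty j)
    rwa [← Finset.sup_eq_iSup, Finset.sup_singleton, Finset.sup_singleton] at this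
  -- monotonicity
  have hWmono : ∀ a b : Fin r, C a ⊆ C b → W a ≤ W b := by
    intro a b hab
    rcases eq_or_ne a b with rfl | hne
    · exact le_rfl
    have h2 := hinf {a, b} (by simp)
    rw [← Finset.inf_eq_iInf, Finset.inf_insert, Finset.inf_singleton] at h2
    have h3 : ({a, b} : Finset (Fin r)).inf' (by simp) C = C a ⊓ C b := by
      rw [Finset.inf'_insert (H := Finset.singleton_nonempty b), Finset.inf'_singleton]
    rw [h3] at h2
    have h4 : C a ⊓ C b = C a := inf_eq_left.mpr (Finset.le_iff_subset.mpr hab)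
    rw [h4, ← hWrank a] at h2
    exact inf_eq_left.mp (Submodule.eq_of_le_of_finrank_eq inf_le_left h2)
  set s : Fin N → Finset (Fin r) :=
    fun k => Finset.univ.filter (fun j => (k : ℕ) + 1 ∈ C j) with hs
  set X : Fin N → Submodule F (Fin N → F) := fun k => (s k).inf W with hXdef
  have hX : ∀ (k : Fin N) (h : (s k).Nonempty),
      ∃ j₀, X k = W j₀ ∧ (k : ℕ) + 1 ∈ C j₀ := by
    intro k h
    obtain ⟨j₀, hj₀⟩ := hclosed (s k) h
    have hsub' : ∀ j ∈ s k, C j₀ ⊆ C j := by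
      intro j hj
      rw [← hj₀]
      exact Finset.le_iff_subset.mp (Finset.inf'_le C hj)
    have hle : W j₀ ≤ X k := Finset.le_inf (fun j hj => hWmono _ _ (hsub' j hj))
    have hrank : finrank F ↥(W j₀) = finrank F ↥(X k) := by
      have := hinf (s k) h
      rw [← Finset.inf_eq_iInf] at this
      rw [hWrank j₀, ← hj₀]
      exact this.symm
    refine ⟨j₀, (Submodule.eq_of_le_of_finrank_eq hle hrank).symm, ?_⟩
    rw [← hj₀]
    apply Finset.inf'_induction (p := fun A : Finset ℕ => (k : ℕ) + 1 ∈ A)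
    · intro a₁ h₁ a₂ h₂
      exact Finset.mem_inter.mpr ⟨h₁, h₂⟩
    · intro j hj
      exact (Finset.mem_filter.mp hj).2
  choose g hg1 hg2 using hX
  -- the rank condition
  have hcond : ∀ P : Finset (Fin N),
      finrank F (⊥ : Submodule F (Fin N → F)) + P.card ≤
        finrank F ↥((⊥ : Submodule F (Fin N → F)) ⊔ P.sup X) := by
    intro P
    rw [finrank_bot, bot_sup_eq, zero_add]
    rcases P.eq_empty_or_nonempty with rfl | hP
    · simp
    by_cases hex : ∃ k ∈ P, s k = ∅
    · obtain ⟨k, hkP, hk⟩ := hex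
      have hXk : X k = ⊤ := by rw [hXdef]; simp [hk]
      have htop : P.sup X = ⊤ := top_le_iff.mp (hXk ▸ Finset.le_sup hkP)
      rw [htop, finrank_top, Module.finrank_pi]
      simpa using Finset.card_le_univ P
    · push_neg at hex
      have hne : ∀ k ∈ P, (s k).Nonempty := fun k hk =>
        hex k hk
      set T : Finset (Fin r) := P.attach.image (fun k => g k.1 (hne k.1 k.2)) with hT
      have hTne : T.Nonempty := (Finset.attach_nonempty_iff.mpr hP).image _
      have hsupT := hsup T hTne
      rw [← Finset.sup_eq_iSup] at hsupT
      have hTW : T.sup W = P.sup X := by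
        rw [hT, Finset.sup_image]
        have : (fun (k : {x // x ∈ P}) => W (g k.1 (hne k.1 k.2))) = fun k => X k.1 := by
          funext k
          exact (hg1 k.1 (hne k.1 k.2)).symm
        rw [show W ∘ (fun (k : {x // x ∈ P}) => g k.1 (hne k.1 k.2)) = fun k => X k.1
          from funext fun k => (hg1 k.1 (hne k.1 k.2)).symm]
        exact Finset.sup_attach P X
      have hcard : P.card ≤ (T.sup C).card := by
        refine Finset.card_le_card_of_injOn (fun k => (k : ℕ) + 1) ?_ ?_
        · intro k hk
          have hmem : g k (hne k hk) ∈ T :=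
            Finset.mem_image.mpr ⟨⟨k, hk⟩, Finset.mem_attach _ _, rfl⟩
          exact (Finset.le_iff_subset.mp (Finset.le_sup hmem)) (hg2 k (hne k hk))
        · intro a _ b _ hab
          have h2 : (a : ℕ) = (b : ℕ) := by simpa using hab
          exact Fin.val_injective h2
      rw [← hTW, hsupT]
      exact hcard
  obtain ⟨v, hvX, hvrank⟩ := rado_aux N (⊥ : Submodule F (Fin N → F)) X hcond
  rw [finrank_bot, bot_sup_eq, zero_add] at hvrank
  have hVrank : finrank F (Fin N → F) = N := by rw [Module.finrank_pi, Fintype.card_fin]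
  have hspan : Submodule.span F (Set.range v) = ⊤ := by
    apply Submodule.eq_top_of_finrank_eq
    have hle := Submodule.finrank_le (Submodule.span F (Set.range v))
    omega
  have hcardeq : Fintype.card (Fin N) = finrank F (Fin N → F) := by
    rw [Fintype.card_fin, hVrank]
  set b : Basis (Fin N) F (Fin N → F) :=
    basisOfTopLeSpanOfCardEqFinrank v (le_of_eq hspan.symm) hcardeq with hb
  have hbv : ⇑b = v := coe_basisOfTopLeSpanOfCardEqFinrank v _ _
  refine ⟨b, fun j => ?_⟩
  rw [hbv]
  set sj : Finset (Fin N) := Finset.univ.filter (fun k => (k : ℕ) + 1 ∈ C j) with hsj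
  have hset : {k : Fin N | (k : ℕ) + 1 ∈ C j} = ↑sj := by
    ext k; simp [hsj]
  rw [hset]
  have hle : Submodule.span F (v '' ↑sj) ≤ W j := by
    rw [Submodule.span_le]
    rintro x ⟨k, hk, rfl⟩
    have hk' : (k : ℕ) + 1 ∈ C j := by
      have : k ∈ sj := hk
      rw [hsj] at this
      exact (Finset.mem_filter.mp this).2
    have hkj : j ∈ s k := by
      rw [hs]
      simp only [Finset.mem_filter, Finset.mem_univ, true_and]
      exact hk'
    exact Finset.inf_le (f := W) hkj (hvX k)
  have hli : LinearIndependent F (v ∘ ((↑) : {x // x ∈ sj} → Fin N)) := by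
    have := b.linearIndependent
    rw [hbv] at this
    exact this.comp _ Subtype.val_injective
  have hrange : Set.range (v ∘ ((↑) : {x // x ∈ sj} → Fin N)) = v '' ↑sj := by
    rw [Set.range_comp]
    rw [Subtype.range_coe]
  have hfr : finrank F ↥(Submodule.span F (v '' ↑sj)) = sj.card := by
    rw [← hrange, finrank_span_eq_card hli, Fintype.card_coe]
  have hcard2 : sj.card = (C j).card := by
    apply Finset.card_bij (fun (k : Fin N) _ => (k : ℕ) + 1)
    · intro k hk
      exact (Finset.mem_filter.mp hk).2
    · intro a _ b' _ hab
      have h2 : (a : ℕ) = (b' : ℕ) := by simpa using hab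
      exact Fin.val_injective h2
    · intro c hc
      have hc' := hsub j hc
      rw [Finset.mem_Icc] at hc'
      refine ⟨⟨c - 1, by omega⟩, ?_, by simp; omega⟩
      rw [hsj]
      simp only [Finset.mem_filter, Finset.mem_univ, true_and]
      have : c - 1 + 1 = c := by omega
      simpa [this] using hc
  exact (Submodule.eq_of_le_of_finrank_eq hle (by rw [hfr, hcard2, hWrank])).symm
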